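/- Let T ∈ ℕ and consider a deterministic array (p_t, r_t, c_t)_{t=0}^{T} with p_t ∈ ℝ^L_{++}, interest rates r_t > −1, and c_t ∈ ℝ^L_+ \ {0}, and set ρ_0 = p_0 and ρ_t = p_t / ∏_{i=1}^{t}(1+r_i) for t ≥ 1. The array is ED-rationalizable if and only if there exist a discount factor d ∈ (0,1] and scalars v_t > 0 for t ∈ {0,…,T} such that v_t − v_s ≥ d^{−t} ρ_tᵀ (c_t − c_s) for all t, s ∈ {0,…,T}. -/

import Mathlib

open MeasureTheory Filter Topology Finset

noncomputable section

/-- Vectors in ℝ^L with the Euclidean norm. -/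
abbrev Vec (L : ℕ) := EuclideanSpace ℝ (Fin L)

/-- Inner product (dot product) of two vectors. -/
def dotp {L : ℕ} (p c : Vec L) : ℝ := ∑ j, p j * c j

/-- Componentwise nonnegative vectors: the set ℝ^L_+. -/
def NonnegV {L : ℕ} (c : Vec L) : Prop := ∀ j, 0 ≤ c j

/-- The consumption space ℝ^L_+ \ {0}. -/
def ConsV {L : ℕ} (c : Vec L) : Prop := NonnegV c ∧ c ≠ 0

/-- Componentwise strictly positive vectors: the set ℝ^L_{++}. -/
def PosV {L : ℕ} (p : Vec L) : Prop := ∀ j, 0 < p j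

/-- Concavity of u on its domain ℝ^L_+. -/
def IsConcaveNN {L : ℕ} (u : Vec L → ℝ) : Prop :=
  ∀ c c' : Vec L, NonnegV c → NonnegV c' → ∀ a : ℝ, 0 ≤ a → a ≤ 1 →
    a * u c + (1 - a) * u c' ≤ u (a • c + (1 - a) • c')

/-- Local nonsatiation of u on its domain ℝ^L_+. -/
def LocallyNonsatiatedNN {L : ℕ} (u : Vec L → ℝ) : Prop :=
  ∀ c : Vec L, NonnegV c → ∀ ε : ℝ, 0 < ε →
    ∃ c' : Vec L, NonnegV c' ∧ ‖c' - c‖ < ε ∧ u c < u c'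

/-- Continuity of u on its domain ℝ^L_+. -/
def ContinuousNN {L : ℕ} (u : Vec L → ℝ) : Prop := ContinuousOn u {c | NonnegV c}

/-- A concave, locally nonsatiated, continuous utility function on ℝ^L_+. -/
def NiceUtility {L : ℕ} (u : Vec L → ℝ) : Prop :=
  IsConcaveNN u ∧ LocallyNonsatiatedNN u ∧ ContinuousNN u

/-- ξ is a supergradient of u at c: u(c') − u(c) ≤ ξᵀ(c'−c) for all c' ∈ ℝ^L_+ \ {0}. -/
def Supergrad {L : ℕ} (u : Vec L → ℝ) (c ξ : Vec L) : Prop :=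
  ∀ c' : Vec L, ConsV c' → u c' - u c ≤ dotp ξ (c' - c)

/-- The compounding factor ∏_{i=1}^{t} (1 + r_i). -/
def Dfac (r : ℕ → ℝ) (t : ℕ) : ℝ := ∏ i ∈ Finset.Icc 1 t, (1 + r i)

/-- Effective (discounted) prices ρ_t = p_t / ∏_{i=1}^{t}(1 + r_i); in particular ρ_0 = p_0. -/
def effP {L T : ℕ} (r : ℕ → ℝ) (p : Fin (T + 1) → Vec L) (t : Fin (T + 1)) : Vec L :=
  (Dfac r (t : ℕ))⁻¹ • p t

/-- ED-rationalizability: there exist a nice utility u, a discount factor d ∈ (0,1],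
incomes y_t > 0, and initial assets a₀ ≥ 0 such that (c_t) maximizes Σ_t d^t u(z_t)
over nonnegative streams satisfying the intertemporal budget constraint
Σ_t ρ_tᵀ z_t = Σ_{t=1}^{T} y_t / ∏_{i=1}^{t}(1+r_i) + a₀. -/
def EDRat {L T : ℕ} (r : ℕ → ℝ) (p c : Fin (T + 1) → Vec L) : Prop :=
  ∃ u : Vec L → ℝ, ∃ d : ℝ, ∃ y : Fin (T + 1) → ℝ, ∃ a₀ : ℝ,
    NiceUtility u ∧ 0 < d ∧ d ≤ 1 ∧ (∀ t, 0 < y t) ∧ 0 ≤ a₀ ∧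
    (∑ t : Fin (T + 1), dotp (effP r p t) (c t)) =
      (∑ t : Fin (T + 1), if t = 0 then 0 else y t / Dfac r (t : ℕ)) + a₀ ∧
    ∀ z : Fin (T + 1) → Vec L, (∀ t, NonnegV (z t)) →
      (∑ t : Fin (T + 1), dotp (effP r p t) (z t)) =
        (∑ t : Fin (T + 1), if t = 0 then 0 else y t / Dfac r (t : ℕ)) + a₀ →
      (∑ t : Fin (T + 1), d ^ (t : ℕ) * u (z t)) ≤ ∑ t : Fin (T + 1), d ^ (t : ℕ) * u (c t)

lemma dotp_sub {L : ℕ} (p x y : Vec L) : dotp p (x - y) = dotp p x - dotp p y := by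
  simp [dotp, ← Finset.sum_sub_distrib, mul_sub]
lemma dotp_add {L : ℕ} (p x y : Vec L) : dotp p (x + y) = dotp p x + dotp p y := by
  simp [dotp, ← Finset.sum_add_distrib, mul_add]
lemma dotp_smul {L : ℕ} (p : Vec L) (a : ℝ) (x : Vec L) : dotp p (a • x) = a * dotp p x := by
  simp only [dotp, Finset.mul_sum, PiLp.smul_apply, smul_eq_mul]
  exact Finset.sum_congr rfl fun j _ => by ring
lemma dotp_smul_left {L : ℕ} (p : Vec L) (a : ℝ) (x : Vec L) :
    dotp (a • p) x = a * dotp p x := by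
  simp only [dotp, Finset.mul_sum, PiLp.smul_apply, smul_eq_mul]
  exact Finset.sum_congr rfl fun j _ => by ring

lemma dotp_nonneg {L : ℕ} {p x : Vec L} (hp : ∀ j, 0 < p j) (hx : NonnegV x) : 0 ≤ dotp p x :=
  Finset.sum_nonneg fun j _ => mul_nonneg (hp j).le (hx j)
lemma dotp_pos {L : ℕ} {p x : Vec L} (hp : ∀ j, 0 < p j) (hx : NonnegV x) (hx0 : x ≠ 0) :
    0 < dotp p x := by
  have hex : ∃ j, x j ≠ 0 := by
    by_contra hcon; push_neg at hcon
    exact hx0 (by ext j; simpa using hcon j)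
  obtain ⟨j, hj⟩ := hex
  exact Finset.sum_pos' (fun k _ => mul_nonneg (hp k).le (hx k))
    ⟨j, Finset.mem_univ j, mul_pos (hp j) (lt_of_le_of_ne (hx j) (Ne.symm hj))⟩
lemma Dfac_pos {T : ℕ} (r : ℕ → ℝ) (hr : ∀ i, 1 ≤ i → i ≤ T → -1 < r i)
    (t : Fin (T + 1)) : 0 < Dfac r (t : ℕ) := by
  apply Finset.prod_pos
  intro i hi
  rw [Finset.mem_Icc] at hi
  have : -1 < r i := hr i hi.1 (le_trans hi.2 (Nat.lt_succ_iff.1 t.isLt))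
  linarith
lemma effP_pos {L T : ℕ} (r : ℕ → ℝ) (hr : ∀ i, 1 ≤ i → i ≤ T → -1 < r i)
    (p : Fin (T + 1) → Vec L) (hp : ∀ t, PosV (p t)) (t : Fin (T + 1)) (j : Fin L) :
    0 < effP r p t j := by
  have : effP r p t j = (Dfac r (t : ℕ))⁻¹ * p t j := rfl
  rw [this]
  exact mul_pos (inv_pos.2 (Dfac_pos r hr t)) (hp t j)


lemma backward {L T : ℕ} (p c : Fin (T + 1) → Vec L) (r : ℕ → ℝ)
    (hr : ∀ i, 1 ≤ i → i ≤ T → -1 < r i)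
    (hp : ∀ t, PosV (p t)) (hc : ∀ t, ConsV (c t))
    (d : ℝ) (hd0 : 0 < d) (hd1 : d ≤ 1) (v : Fin (T + 1) → ℝ) (hv : ∀ t, 0 < v t)
    (hAf : ∀ t s, v t - v s ≥ (d ^ (t : ℕ))⁻¹ * dotp (effP r p t) (c t - c s)) :
    EDRat r p c := by
  rcases Nat.eq_zero_or_pos L with hL | hL
  · exfalso
    apply (hc 0).2
    subst hL
    exact Subsingleton.elim _ _
  set ρ : Fin (T + 1) → Vec L := effP r p with hρdef
  have hρ : ∀ t j, 0 < ρ t j := effP_pos r hr p hp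
  have hdpow : ∀ t : Fin (T + 1), (0 : ℝ) < d ^ (t : ℕ) := fun t => pow_pos hd0 _
  set A : Fin (T + 1) → Vec L → ℝ :=
    fun t z => v t + (d ^ (t : ℕ))⁻¹ * dotp (ρ t) (z - c t) with hAdef
  have hne : (Finset.univ : Finset (Fin (T + 1))).Nonempty := ⟨0, Finset.mem_univ 0⟩
  set u : Vec L → ℝ := fun z => Finset.univ.inf' hne (fun t => A t z) with hudef
  have hu_le : ∀ (t : Fin (T + 1)) z, u z ≤ A t z :=
    fun t z => Finset.inf'_le _ (Finset.mem_univ t)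
  have hAaffine : ∀ (t : Fin (T + 1)) (x y : Vec L) (a : ℝ),
      A t (a • x + (1 - a) • y) = a * A t x + (1 - a) * A t y := by
    intro t x y a
    have : (a • x + (1 - a) • y) - c t = a • (x - c t) + (1 - a) • (y - c t) := by
      module
    simp only [hAdef, this, dotp_add, dotp_smul]
    ring
  have hucs : ∀ t, u (c t) = v t := by
    intro t
    apply le_antisymm
    · have := hu_le t (c t)
      simpa [hAdef, sub_self, dotp] using this
    · apply Finset.le_inf'
      intro s _
      have h := hAf s t
      have : A s (c t) = v s - (d ^ (s : ℕ))⁻¹ * dotp (ρ s) (c s - c t) := by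
        simp only [hAdef]
        rw [show (c t) - c s = -(c s - c t) by abel, show dotp (ρ s) (-(c s - c t)) = - dotp (ρ s) (c s - c t) from by
          rw [show -(c s - c t) = (0 : Vec L) - (c s - c t) by abel, dotp_sub]; simp [dotp]]
        ring
      rw [this]
      linarith
  have hconc : IsConcaveNN u := by
    intro x y _ _ a ha0 ha1
    apply Finset.le_inf'
    intro t _
    rw [hAaffine t x y a]
    have h1 : u x ≤ A t x := hu_le t x
    have h2 : u y ≤ A t y := hu_le t y
    nlinarith
  have hcont : ContinuousNN u := by
    apply Continuous.continuousOn
    apply Continuous.finset_inf'_apply hne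
    intro t _
    apply Continuous.add continuous_const
    apply Continuous.mul continuous_const
    have : Continuous fun z : Vec L => dotp (ρ t) (z - c t) := by
      have : ∀ z : Vec L, dotp (ρ t) (z - c t) = ∑ j, ρ t j * (z j - c t j) := by
        intro z; simp [dotp]
      simp only [this]
      apply continuous_finset_sum
      intro j _
      exact (continuous_const.mul (((EuclideanSpace.proj j).continuous).sub continuous_const))
    exact this
  have hlns : LocallyNonsatiatedNN u := by
    intro z hz ε hε
    obtain ⟨j₀⟩ : Nonempty (Fin L) := ⟨⟨0, hL⟩⟩
    refine ⟨z + (ε / 2) • EuclideanSpace.single j₀ (1 : ℝ), ?_, ?_, ?_⟩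
    · intro j
      have : (z + (ε / 2) • EuclideanSpace.single j₀ (1 : ℝ)) j
          = z j + (ε / 2) * (EuclideanSpace.single j₀ (1 : ℝ)) j := rfl
      rw [this, EuclideanSpace.single_apply]
      have := hz j
      split <;> [linarith; simpa using this]
    · rw [add_sub_cancel_left, norm_smul, EuclideanSpace.norm_single]
      rw [Real.norm_eq_abs, abs_of_pos (half_pos hε), norm_one, mul_one]
      linarith
    · rw [hudef]
      rw [Finset.lt_inf'_iff]
      intro t _
      have hst : A t (z + (ε / 2) • EuclideanSpace.single j₀ (1 : ℝ))
          = A t z + (ε / 2) * ((d ^ (t : ℕ))⁻¹ * ρ t j₀) := by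
        simp only [hAdef]
        rw [show z + (ε / 2) • EuclideanSpace.single j₀ (1 : ℝ) - c t
            = (z - c t) + (ε / 2) • EuclideanSpace.single j₀ (1 : ℝ) by abel]
        rw [dotp_add, dotp_smul]
        have : dotp (ρ t) (EuclideanSpace.single j₀ (1 : ℝ)) = ρ t j₀ := by
          simp [dotp, EuclideanSpace.single_apply]
        rw [this]; ring
      calc u z ≤ A t z := hu_le t z
        _ < _ := by
            rw [hst]
            have : 0 < (ε / 2) * ((d ^ (t : ℕ))⁻¹ * ρ t j₀) :=
              mul_pos (half_pos hε) (mul_pos (inv_pos.2 (hdpow t)) (hρ t j₀))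
            linarith
  -- budget pieces
  set m : ℝ := ∑ t : Fin (T + 1), dotp (ρ t) (c t) with hmdef
  set y : Fin (T + 1) → ℝ := fun t => dotp (p t) (c t) with hydef
  have hy : ∀ t, 0 < y t := fun t => dotp_pos (hp t) (hc t).1 (hc t).2
  have hDot : ∀ t, dotp (ρ t) (c t) = y t / Dfac r (t : ℕ) := by
    intro t
    rw [hρdef]
    show dotp ((Dfac r (t : ℕ))⁻¹ • p t) (c t) = _
    rw [dotp_smul_left, div_eq_inv_mul]
  have hbudget : m = (∑ t : Fin (T + 1), if t = 0 then 0 else y t / Dfac r (t : ℕ))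
      + dotp (ρ 0) (c 0) := by
    have h1 : ∀ t : Fin (T + 1), (if t = 0 then (0:ℝ) else y t / Dfac r (t : ℕ))
        = dotp (ρ t) (c t) - (if t = 0 then dotp (ρ t) (c t) else 0) := by
      intro t
      by_cases h : t = 0 <;> simp [h, hDot t]
    rw [hmdef]
    rw [Finset.sum_congr rfl (fun t _ => h1 t), Finset.sum_sub_distrib]
    rw [Finset.sum_ite_eq' Finset.univ (0 : Fin (T + 1)) (fun t => dotp (ρ t) (c t))]
    simp
  refine ⟨u, d, y, dotp (ρ 0) (c 0), ⟨hconc, hlns, hcont⟩, hd0, hd1, hy,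
    dotp_nonneg (hρ 0) (hc 0).1, hbudget, ?_⟩
  intro z hz hzb
  have hcost : ∑ t : Fin (T + 1), dotp (ρ t) (z t) = m := by
    rw [hzb, hbudget]
  calc ∑ t : Fin (T + 1), d ^ (t : ℕ) * u (z t)
      ≤ ∑ t : Fin (T + 1), d ^ (t : ℕ) * A t (z t) := by
        apply Finset.sum_le_sum
        intro t _
        exact mul_le_mul_of_nonneg_left (hu_le t (z t)) (hdpow t).le
    _ = ∑ t : Fin (T + 1), (d ^ (t : ℕ) * v t + dotp (ρ t) (z t - c t)) := by
        apply Finset.sum_congr rfl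
        intro t _
        simp only [hAdef]
        field_simp
    _ = (∑ t : Fin (T + 1), d ^ (t : ℕ) * v t)
        + ((∑ t : Fin (T + 1), dotp (ρ t) (z t)) - m) := by
        rw [Finset.sum_add_distrib, hmdef, ← Finset.sum_sub_distrib]
        congr 1
        exact Finset.sum_congr rfl fun t _ => dotp_sub _ _ _
    _ = ∑ t : Fin (T + 1), d ^ (t : ℕ) * u (c t) := by
        rw [hcost, sub_self, add_zero]
        exact Finset.sum_congr rfl fun t _ => by rw [hucs t]

lemma forward {L T : ℕ} (p c : Fin (T + 1) → Vec L) (r : ℕ → ℝ)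
    (hr : ∀ i, 1 ≤ i → i ≤ T → -1 < r i)
    (hp : ∀ t, PosV (p t)) (hc : ∀ t, ConsV (c t)) (h : EDRat r p c) :
    ∃ d : ℝ, 0 < d ∧ d ≤ 1 ∧ ∃ v : Fin (T + 1) → ℝ, (∀ t, 0 < v t) ∧
      ∀ t s, v t - v s ≥ (d ^ (t : ℕ))⁻¹ * dotp (effP r p t) (c t - c s) := by
  obtain ⟨u, d, y, a₀, ⟨hconc, hlns, hcont⟩, hd0, hd1, hy, ha₀, hbud, hopt⟩ := h
  set ρ : Fin (T + 1) → Vec L := effP r p with hρdef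
  have hρ : ∀ t j, 0 < ρ t j := effP_pos r hr p hp
  have hdpow : ∀ t : Fin (T + 1), (0 : ℝ) < d ^ (t : ℕ) := fun t => pow_pos hd0 _
  set cost : (Fin (T + 1) → Vec L) → ℝ := fun z => ∑ t, dotp (ρ t) (z t) with hcostdef
  set U : (Fin (T + 1) → Vec L) → ℝ := fun z => ∑ t : Fin (T + 1), d ^ (t : ℕ) * u (z t) with hUdef
  set m : ℝ := cost c with hmdef
  have hopt' : ∀ z : Fin (T + 1) → Vec L, (∀ t, NonnegV (z t)) → cost z = m → U z ≤ U c := by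
    intro z hz hcz
    exact hopt z hz (by rw [← hbud]; exact hcz)
  have hm : 0 < m :=
    Finset.sum_pos (fun t _ => dotp_pos (hρ t) (hc t).1 (hc t).2) ⟨0, Finset.mem_univ 0⟩
  have hcost_nonneg : ∀ z : Fin (T + 1) → Vec L, (∀ t, NonnegV (z t)) → 0 ≤ cost z :=
    fun z hz => Finset.sum_nonneg fun t _ => dotp_nonneg (hρ t) (hz t)
  -- update lemmas
  have hcostup : ∀ (w : Fin (T + 1) → Vec L) (t₀ : Fin (T + 1)) (x : Vec L),
      cost (Function.update w t₀ x) = cost w + (dotp (ρ t₀) x - dotp (ρ t₀) (w t₀)) := by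
    intro w t₀ x
    have h1 : ∀ t : Fin (T + 1), dotp (ρ t) (Function.update w t₀ x t)
        = dotp (ρ t) (w t) + (if t = t₀ then dotp (ρ t₀) x - dotp (ρ t₀) (w t₀) else 0) := by
      intro t
      by_cases ht : t = t₀
      · subst ht; simp [Function.update_self]
      · simp [Function.update_of_ne ht, ht]
    rw [hcostdef]
    simp only [h1, Finset.sum_add_distrib]
    rw [Finset.sum_ite_eq' Finset.univ t₀]
    simp [hcostdef]
  have hUup : ∀ (w : Fin (T + 1) → Vec L) (t₀ : Fin (T + 1)) (x : Vec L),
      U (Function.update w t₀ x) = U w + d ^ (t₀ : ℕ) * (u x - u (w t₀)) := by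
    intro w t₀ x
    have h1 : ∀ t : Fin (T + 1), d ^ (t : ℕ) * u (Function.update w t₀ x t)
        = d ^ (t : ℕ) * u (w t)
          + (if t = t₀ then d ^ (t₀ : ℕ) * (u x - u (w t₀)) else 0) := by
      intro t
      by_cases ht : t = t₀
      · subst ht; simp [Function.update_self]; ring
      · simp [Function.update_of_ne ht, ht]
    rw [hUdef]
    simp only [h1, Finset.sum_add_distrib]
    rw [Finset.sum_ite_eq' Finset.univ t₀]
    simp [hUdef]
  -- cross slope inequality
  have hcross : ∀ (a b : ℝ) (z w : Fin (T + 1) → Vec L),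
      (∀ t, NonnegV (z t)) → (∀ t, NonnegV (w t)) →
      cost z = m + a → cost w = m + b → a < 0 → 0 < b →
      (U w - U c) / b ≤ (U c - U z) / (-a) := by
    intro a b z w hz hw hza hwb ha hb
    have hba : 0 < b - a := by linarith
    set θ : ℝ := b / (b - a) with hθdef
    have hθ0 : 0 ≤ θ := div_nonneg hb.le hba.le
    have hθ1 : θ ≤ 1 := by
      rw [hθdef, div_le_one hba]; linarith
    set mix : Fin (T + 1) → Vec L := fun t => θ • z t + (1 - θ) • w t with hmixdef
    have hmixnn : ∀ t, NonnegV (mix t) := by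
      intro t j
      have : mix t j = θ * z t j + (1 - θ) * w t j := rfl
      rw [this]
      have := hz t j; have := hw t j
      nlinarith
    have hmixcost : cost mix = m := by
      have h1 : ∀ t : Fin (T + 1), dotp (ρ t) (mix t)
          = θ * dotp (ρ t) (z t) + (1 - θ) * dotp (ρ t) (w t) := by
        intro t
        rw [hmixdef]
        simp only [dotp_add, dotp_smul]
      rw [hcostdef]
      simp only [h1]
      rw [Finset.sum_add_distrib, ← Finset.mul_sum, ← Finset.mul_sum]
      rw [show (∑ t, dotp (ρ t) (z t)) = cost z from rfl,
        show (∑ t, dotp (ρ t) (w t)) = cost w from rfl, hza, hwb, hθdef]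
      field_simp
      ring
    have hmixle : U mix ≤ U c := hopt' mix hmixnn hmixcost
    have hmixge : θ * U z + (1 - θ) * U w ≤ U mix := by
      have h2 : ∀ t : Fin (T + 1), d ^ (t : ℕ) * (θ * u (z t) + (1 - θ) * u (w t))
          ≤ d ^ (t : ℕ) * u (mix t) := by
        intro t
        exact mul_le_mul_of_nonneg_left
          (hconc (z t) (w t) (hz t) (hw t) θ hθ0 hθ1) (hdpow t).le
      calc θ * U z + (1 - θ) * U w
          = ∑ t : Fin (T + 1), d ^ (t : ℕ) * (θ * u (z t) + (1 - θ) * u (w t)) := by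
            rw [hUdef, Finset.mul_sum, Finset.mul_sum, ← Finset.sum_add_distrib]
            exact Finset.sum_congr rfl fun t _ => by ring
        _ ≤ ∑ t : Fin (T + 1), d ^ (t : ℕ) * u (mix t) := Finset.sum_le_sum fun t _ => h2 t
        _ = U mix := rfl
    have hkey : θ * U z + (1 - θ) * U w ≤ U c := le_trans hmixge hmixle
    rw [div_le_div_iff₀ hb (by linarith : (0:ℝ) < -a)]
    have e1 : θ * (b - a) = b := by rw [hθdef]; field_simp
    have e2 : (1 - θ) * (b - a) = -a := by rw [hθdef]; field_simp; ring
    have h6 := mul_le_mul_of_nonneg_right hkey hba.le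
    have h7 : b * U z + (-a) * U w ≤ U c * (b - a) := by
      calc b * U z + (-a) * U w = (θ * (b - a)) * U z + ((1 - θ) * (b - a)) * U w := by
            rw [e1, e2]
        _ = (θ * U z + (1 - θ) * U w) * (b - a) := by ring
        _ ≤ U c * (b - a) := h6
    nlinarith [h7]
  -- the multiplier
  set lamSet : Set ℝ := {x | ∃ (a : ℝ) (z : Fin (T + 1) → Vec L),
    -m ≤ a ∧ a < 0 ∧ (∀ t, NonnegV (z t)) ∧ cost z = m + a ∧ x = (U c - U z) / (-a)}
    with hlamSetdef
  set lam : ℝ := sInf lamSet with hlamdef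
  have hz0nn : ∀ t : Fin (T + 1), NonnegV ((fun _ => (0 : Vec L)) t) := by
    intro t j; simp
  have hz0cost : cost (fun _ => (0 : Vec L)) = m + (-m) := by
    simp [hcostdef, dotp]
  have hne : lamSet.Nonempty :=
    ⟨(U c - U (fun _ => (0 : Vec L))) / (-(-m)),
      -m, fun _ => (0 : Vec L), le_refl _, by linarith, hz0nn, hz0cost, rfl⟩
  -- a costlier stream
  set w0 : Fin (T + 1) → Vec L := Function.update c 0 ((2 : ℝ) • c 0) with hw0def
  set b0 : ℝ := dotp (ρ 0) (c 0) with hb0def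
  have hb0 : 0 < b0 := dotp_pos (hρ 0) (hc 0).1 (hc 0).2
  have hw0nn : ∀ t, NonnegV (w0 t) := by
    intro t j
    rw [hw0def]
    by_cases ht : t = 0
    · subst ht
      rw [Function.update_self]
      have : ((2 : ℝ) • c 0) j = 2 * c 0 j := rfl
      rw [this]
      have := (hc 0).1 j
      linarith
    · rw [Function.update_of_ne ht]
      exact (hc t).1 j
  have hw0cost : cost w0 = m + b0 := by
    rw [hw0def, hcostup, dotp_smul, ← hmdef, hb0def]
    ring
  have hlb : ∀ (b : ℝ) (w : Fin (T + 1) → Vec L), 0 < b → (∀ t, NonnegV (w t)) →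
      cost w = m + b → (U w - U c) / b ∈ lowerBounds lamSet := by
    intro b w hb hw hwc
    rintro x ⟨a, z, hma, ha, hz, hzc, rfl⟩
    exact hcross a b z w hz hw hzc hwc ha hb
  have hbdd : BddBelow lamSet :=
    ⟨(U w0 - U c) / b0, hlb b0 w0 hb0 hw0nn hw0cost⟩
  -- master inequality
  have hmaster : ∀ z : Fin (T + 1) → Vec L, (∀ t, NonnegV (z t)) →
      U z - U c ≤ lam * (cost z - m) := by
    intro z hz
    set a : ℝ := cost z - m with hadef
    rcases lt_trichotomy a 0 with ha | ha | ha
    · have hma : -m ≤ a := by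
        have := hcost_nonneg z hz
        rw [hadef]; linarith
      have hmem : (U c - U z) / (-a) ∈ lamSet :=
        ⟨a, z, hma, ha, hz, by rw [hadef]; ring, rfl⟩
      have hle : lam ≤ (U c - U z) / (-a) := csInf_le hbdd hmem
      have hmul := mul_le_mul_of_nonneg_right hle (by linarith : (0:ℝ) ≤ -a)
      rw [div_mul_cancel₀ _ (by linarith : -a ≠ 0)] at hmul
      nlinarith
    · have : cost z = m := by rw [hadef] at ha; linarith
      have := hopt' z hz this
      rw [ha, mul_zero]; linarith
    · have hge : (U z - U c) / a ≤ lam := by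
        apply le_csInf hne
        rintro x ⟨a', z', hma', ha', hz', hzc', rfl⟩
        exact hcross a' a z' z hz' hz hzc' (by rw [hadef]; ring) ha' ha
      have hmul := mul_le_mul_of_nonneg_right hge ha.le
      rw [div_mul_cancel₀ _ ha.ne'] at hmul
      linarith
  -- lam is positive
  have hlam : 0 < lam := by
    set K : Set (Vec L) := {x | NonnegV x ∧ dotp (ρ 0) x ≤ b0} with hKdef
    have hdotc : Continuous fun x : Vec L => dotp (ρ 0) x := by
      have he : (fun x : Vec L => dotp (ρ 0) x) = fun x => ∑ j, ρ 0 j * x j := rfl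
      rw [he]
      exact continuous_finset_sum _ fun j _ =>
        continuous_const.mul (EuclideanSpace.proj j).continuous
    have h1c : IsClosed {x : Vec L | NonnegV x} := by
      have he : {x : Vec L | NonnegV x} = ⋂ j, {x : Vec L | 0 ≤ x j} := by
        ext x; simp [NonnegV, Set.mem_iInter]
      rw [he]
      exact isClosed_iInter fun j =>
        isClosed_le continuous_const (EuclideanSpace.proj j).continuous
    have h2c : IsClosed {x : Vec L | dotp (ρ 0) x ≤ b0} := isClosed_le hdotc continuous_const
    have hKclosed : IsClosed K := by
      have he : K = {x : Vec L | NonnegV x} ∩ {x : Vec L | dotp (ρ 0) x ≤ b0} := rfl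
      rw [he]
      exact h1c.inter h2c
    have hKbdd : Bornology.IsBounded K := by
      rw [Metric.isBounded_iff_subset_closedBall 0]
      refine ⟨Real.sqrt (∑ j, (b0 / ρ 0 j) ^ 2), ?_⟩
      intro x hx
      rw [Metric.mem_closedBall, dist_zero_right, EuclideanSpace.norm_eq]
      apply Real.sqrt_le_sqrt
      apply Finset.sum_le_sum
      intro j _
      have h1 : ρ 0 j * x j ≤ b0 := by
        calc ρ 0 j * x j ≤ ∑ k, ρ 0 k * x k :=
              Finset.single_le_sum (fun k _ => mul_nonneg (hρ 0 k).le (hx.1 k))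
                (Finset.mem_univ j)
          _ = dotp (ρ 0) x := rfl
          _ ≤ b0 := hx.2
      have h2 : x j ≤ b0 / ρ 0 j := by
        rw [le_div_iff₀ (hρ 0 j)]; linarith [mul_comm (x j) (ρ 0 j)]
      have h3 : (0:ℝ) ≤ x j := hx.1 j
      have : ‖x j‖ = x j := by rw [Real.norm_eq_abs, abs_of_nonneg h3]
      rw [this]
      exact pow_le_pow_left₀ h3 h2 2
    have hKcompact : IsCompact K := Metric.isCompact_of_isClosed_isBounded hKclosed hKbdd
    have hKne : c 0 ∈ K := ⟨(hc 0).1, le_refl _⟩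
    have hKsub : K ⊆ {x : Vec L | NonnegV x} := fun x hx => hx.1
    obtain ⟨wstar, hwK, hwmax⟩ :=
      hKcompact.exists_isMaxOn ⟨c 0, hKne⟩ (hcont.mono hKsub)
    obtain ⟨w', hw'nn, _, hw'u⟩ := hlns wstar hwK.1 1 one_pos
    have hw'cost : b0 < dotp (ρ 0) w' := by
      by_contra hcon
      push_neg at hcon
      have : w' ∈ K := ⟨hw'nn, hcon⟩
      exact absurd (hwmax this) (not_le.2 hw'u)
    have hc0le : u (c 0) ≤ u wstar := hwmax hKne
    set z' : Fin (T + 1) → Vec L := Function.update c 0 w' with hz'def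
    have hz'nn : ∀ t, NonnegV (z' t) := by
      intro t j
      rw [hz'def]
      by_cases ht : t = 0
      · subst ht; rw [Function.update_self]; exact hw'nn j
      · rw [Function.update_of_ne ht]; exact (hc t).1 j
    have hz'cost : cost z' = m + (dotp (ρ 0) w' - b0) := by
      rw [hz'def, hcostup, ← hmdef, hb0def]
    have hz'U : U z' = U c + (u w' - u (c 0)) := by
      rw [hz'def, hUup]
      norm_num
    have hmz := hmaster z' hz'nn
    rw [hz'U, hz'cost] at hmz
    have h4 : 0 < u w' - u (c 0) := by
      have : u (c 0) < u w' := lt_of_le_of_lt hc0le hw'u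
      linarith
    have h5 : 0 < dotp (ρ 0) w' - b0 := by linarith
    have h6 : u w' - u (c 0) ≤ lam * (dotp (ρ 0) w' - b0) := by linarith
    by_contra hno
    push_neg at hno
    have h7 := mul_le_mul_of_nonneg_right hno h5.le
    rw [zero_mul] at h7
    linarith
  -- conclude
  obtain ⟨t₀, _, ht₀⟩ :=
    Finset.exists_min_image Finset.univ (fun t => u (c t)) ⟨0, Finset.mem_univ 0⟩
  refine ⟨d, hd0, hd1, fun t => (u (c t) - u (c t₀)) / lam + 1, ?_, ?_⟩
  · intro t
    have h1 : 0 ≤ (u (c t) - u (c t₀)) / lam :=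
      div_nonneg (by linarith [ht₀ t (Finset.mem_univ t)]) hlam.le
    linarith
  · intro t s
    have hpair : d ^ (t : ℕ) * (u (c s) - u (c t))
        ≤ lam * (dotp (ρ t) (c s) - dotp (ρ t) (c t)) := by
      have h1 := hmaster (Function.update c t (c s)) (by
        intro τ j
        by_cases hτ : τ = t
        · subst hτ; rw [Function.update_self]; exact (hc s).1 j
        · rw [Function.update_of_ne hτ]; exact (hc τ).1 j)
      rw [hcostup, hUup, ← hmdef] at h1
      linarith
    have hvts : ((u (c t) - u (c t₀)) / lam + 1) - ((u (c s) - u (c t₀)) / lam + 1)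
        = (u (c t) - u (c s)) / lam := by
      field_simp
      ring
    rw [ge_iff_le, hvts, dotp_sub, le_div_iff₀ hlam]
    have h2 := mul_le_mul_of_nonneg_left hpair (inv_pos.2 (hdpow t)).le
    rw [← mul_assoc, inv_mul_cancel₀ (hdpow t).ne', one_mul] at h2
    have h3 : (d ^ (t : ℕ))⁻¹ * (lam * (dotp (ρ t) (c s) - dotp (ρ t) (c t)))
        = -((d ^ (t : ℕ))⁻¹ * (dotp (ρ t) (c t) - dotp (ρ t) (c s)) * lam) := by ring
    linarith [h2, h3.le, h3.ge]

/-- the array (p_t, r_t, c_t) is ED-rationalizable iff there exist a discount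
factor d ∈ (0,1] and scalars v_t > 0 such that v_t − v_s ≥ d^{−t} ρ_tᵀ (c_t − c_s)
for all t, s. -/
theorem stmt_3 {L T : ℕ} (p c : Fin (T + 1) → Vec L) (r : ℕ → ℝ)
    (hr : ∀ i, 1 ≤ i → i ≤ T → -1 < r i)
    (hp : ∀ t, PosV (p t)) (hc : ∀ t, ConsV (c t)) :
    EDRat r p c ↔
      ∃ d : ℝ, 0 < d ∧ d ≤ 1 ∧ ∃ v : Fin (T + 1) → ℝ, (∀ t, 0 < v t) ∧
        ∀ t s, v t - v s ≥ (d ^ (t : ℕ))⁻¹ * dotp (effP r p t) (c t - c s) := by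
  constructor
  · intro h
    exact forward p c r hr hp hc h
  · rintro ⟨d, hd0, hd1, v, hv, hAf⟩
    exact backward p c r hr hp hc d hd0 hd1 v hv hAf


end
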